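/- Under the satisfaction axiom, a performance concentrated on the maximum satisfaction is among the best: let ≲ be a reflexive transitive relation on performances such that for all s ∈ ℝ and all performances p₁, p₂ with p₁({ω : S(ω) ≤ s}) = 1 and p₂({ω : S(ω) ≥ s}) = 1, one has p₁ ≲ p₂ or p₁ ≁ p₂. Let s_max = max_{ω∈Ω} S(ω). Then for every performance p with p({ω : S(ω) = s_max}) = 1, there exists no performance p' with p < p'. -/
import Mathlib


/-- A performance on a finite sample space: nonnegative and summing to one. -/
def IsPerformance {Ω : Type*} [Fintype Ω] (p : Ω → ℝ) : Prop :=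
  (∀ ω, 0 ≤ p ω) ∧ ∑ ω, p ω = 1

theorem stmt15 {Ω : Type*} [Fintype Ω] [Nonempty Ω] (S : Ω → ℝ)
    (rel : (Ω → ℝ) → (Ω → ℝ) → Prop)
    (hrefl : Reflexive rel) (htrans : Transitive rel)
    (hax : ∀ (s : ℝ) (p₁ p₂ : Ω → ℝ), IsPerformance p₁ → IsPerformance p₂ →
      ∑ ω ∈ Finset.univ.filter (fun ω => S ω ≤ s), p₁ ω = 1 →
      ∑ ω ∈ Finset.univ.filter (fun ω => s ≤ S ω), p₂ ω = 1 →
      rel p₁ p₂ ∨ (¬ rel p₁ p₂ ∧ ¬ rel p₂ p₁))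
    (p : Ω → ℝ) (hp : IsPerformance p)
    (hmax : ∑ ω ∈ Finset.univ.filter
        (fun ω => S ω = Finset.univ.sup' Finset.univ_nonempty S), p ω = 1) :
    ¬ ∃ p' : Ω → ℝ, IsPerformance p' ∧ rel p p' ∧ ¬ rel p' p := by
  rintro ⟨p', hp', hpp', hnp'p⟩
  set smax := Finset.univ.sup' Finset.univ_nonempty S with hs
  have h1 : ∑ ω ∈ Finset.univ.filter (fun ω => S ω ≤ smax), p' ω = 1 := by
    have : Finset.univ.filter (fun ω => S ω ≤ smax) = Finset.univ := by
      apply Finset.filter_true_of_mem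
      intro ω _
      exact Finset.le_sup' S (Finset.mem_univ ω)
    rw [this]; exact hp'.2
  have h2 : ∑ ω ∈ Finset.univ.filter (fun ω => smax ≤ S ω), p ω = 1 := by
    have : Finset.univ.filter (fun ω => smax ≤ S ω)
        = Finset.univ.filter (fun ω => S ω = smax) := by
      apply Finset.filter_congr
      intro ω _
      constructor
      · intro h; exact le_antisymm (Finset.le_sup' S (Finset.mem_univ ω)) h
      · intro h; exact h.ge
    rw [this]; exact hmax
  rcases hax smax p' p hp' hp h1 h2 with h | ⟨h, h'⟩
  · exact hnp'p h
  · exact h' hpp'
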